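/- Let A be a finite abelian group, T ∈ Aut(A) of order d, j an integer, and suppose (id + T^{j+1})(id − T) ≠ 0 as an endomorphism of A. In G = A ⋊ ⟨T⟩, let r = (0, T) and choose v ∈ A with (id + T^{j+1})(id − T)(v) ≠ 0 and s = (v, T^j). Then r ▷ (s ▷ (r ▷ s)) ≠ s, where ▷ is conjugation in G. -/

import Mathlib

/-- The multiplicative group structure that older Mathlib put on `AddAut A`
(composition; now Mathlib makes `AddAut A` an additive group instead). -/
instance addAutOldGroup (A : Type*) [Add A] : Group (AddAut A) where
  mul g h := AddEquiv.trans h g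
  one := AddEquiv.refl _
  inv := AddEquiv.symm
  mul_assoc _ _ _ := rfl
  one_mul _ := rfl
  mul_one _ := rfl
  inv_mul_cancel := AddEquiv.self_trans_symm

theorem addAut_mul_apply {A : Type*} [Add A] (e₁ e₂ : AddAut A) (m : A) :
    (e₁ * e₂) m = e₁ (e₂ m) := rfl

theorem addAut_apply_inv_self {A : Type*} [Add A] (e : AddAut A) (m : A) :
    e (e⁻¹ m) = m := e.apply_symm_apply m

theorem addAut_inv_apply_self {A : Type*} [Add A] (e : AddAut A) (m : A) :
    e⁻¹ (e m) = m := e.symm_apply_apply m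

/-- The action of the cyclic group `⟨T⟩ ≤ Aut A` on `A`, as a homomorphism
into `MulAut (Multiplicative A)`, used to form `A ⋊ ⟨T⟩`. -/
def affineAction (A : Type*) [AddCommGroup A] (T : AddAut A) :
    ↥(Subgroup.zpowers T) →* MulAut (Multiplicative A) :=
  MonoidHom.mk' (fun S => AddEquiv.toMultiplicative S.1) (fun _ _ => rfl)

lemma affineAction_apply (A : Type*) [AddCommGroup A] (T : AddAut A)
    (S : ↥(Subgroup.zpowers T)) (a : A) :
    (affineAction A T S) (Multiplicative.ofAdd a) = Multiplicative.ofAdd (S.1 a) := rfl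

/-- In `G = A ⋊ ⟨T⟩`, with `r = (0, T)` and `s = (v, T^j)` where
`(id + T^{j+1})(id - T)(v) ≠ 0`, one has
`r ▷ (s ▷ (r ▷ s)) = ((T - T^{j+1} + T^{j+2})(v), T^j) ≠ s`. -/
theorem stmt10 (A : Type*) [AddCommGroup A] [Fintype A] (T : AddAut A)
    (j : ℤ) (v : A)
    (hv : (v - T v) + (T ^ (j + 1)) (v - T v) ≠ 0) :
    let G := Multiplicative A ⋊[affineAction A T] ↥(Subgroup.zpowers T)
    let r : G := ⟨Multiplicative.ofAdd 0, ⟨T, Subgroup.mem_zpowers T⟩⟩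
    let s : G := ⟨Multiplicative.ofAdd v, ⟨T ^ j, zpow_mem (Subgroup.mem_zpowers T) j⟩⟩
    r * (s * (r * s * r⁻¹) * s⁻¹) * r⁻¹ =
        ⟨Multiplicative.ofAdd (T v - (T ^ (j + 1)) v + (T ^ (j + 2)) v),
          ⟨T ^ j, zpow_mem (Subgroup.mem_zpowers T) j⟩⟩ ∧
      r * (s * (r * s * r⁻¹) * s⁻¹) * r⁻¹ ≠ s := by
  intro G r s
  have hc : ∀ x : A, T ((T ^ j) x) = (T ^ j) (T x) := fun x => by
    rw [← addAut_mul_apply, ← addAut_mul_apply, ((Commute.refl T).zpow_right j).eq]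
  have heq : r * (s * (r * s * r⁻¹) * s⁻¹) * r⁻¹ =
      (⟨Multiplicative.ofAdd (T v - (T ^ (j + 1)) v + (T ^ (j + 2)) v),
        ⟨T ^ j, zpow_mem (Subgroup.mem_zpowers T) j⟩⟩ : G) := by
    apply SemidirectProduct.ext
    · unfold G r s
      simp only [SemidirectProduct.mul_left, SemidirectProduct.inv_left,
        SemidirectProduct.mul_right, SemidirectProduct.inv_right,
        ← ofAdd_neg, ← ofAdd_add, affineAction_apply, MulMemClass.coe_mul,
        InvMemClass.coe_inv, addAut_mul_apply, map_neg, map_zero, zpow_add,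
        zpow_one, addAut_apply_inv_self, addAut_inv_apply_self,
        AddEquiv.apply_symm_apply, AddEquiv.symm_apply_apply, hc]
      simp only [zpow_two, addAut_mul_apply, map_add, map_neg, map_zero, hc,
        sub_eq_add_neg]
      abel
    · apply Subtype.ext
      show (T * ((T ^ j * (T * T ^ j * T⁻¹)) * (T ^ j)⁻¹)) * T⁻¹ = T ^ j
      group
  refine ⟨heq, ?_⟩
  rw [heq]
  intro h
  apply hv
  have h2 : T v - (T ^ (j + 1)) v + (T ^ (j + 2)) v = v :=
    Multiplicative.ofAdd.injective (congrArg SemidirectProduct.left h)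
  have h3 : (T ^ (j + 1)) (T v) = (T ^ (j + 2)) v := by
    rw [← addAut_mul_apply, ← zpow_add_one]
    rw [show (j + 1 + 1 : ℤ) = j + 2 by ring]
  rw [map_sub, h3,
    show v - T v + ((T ^ (j + 1)) v - (T ^ (j + 2)) v) =
      v - (T v - (T ^ (j + 1)) v + (T ^ (j + 2)) v) by abel, h2, sub_self]
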